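/- arXiv:1605.04103 — 2 statements merged into one kernel-verified Lean document; each statement's English description precedes it below -/
import Mathlib

section
/- Let λ ≠ 0 be a simple eigenvalue of εMΔ (ε > 0, Δ block-diagonal with structure 𝔹*) with right eigenvector x and left eigenvector y normalized so that ‖x‖ = ‖y‖ = 1 and y*x = |y*x|e^{-iθ} where λ = |λ|e^{iθ}. Set z = M*y. Then Re⟨zx*, εΔ⟩ = |λ|·|y*x| > 0, and consequently the orthogonal projection P_{𝔹*}(zx*) of zx* onto the subspace 𝔹* is nonzero. -/
open scoped BigOperators
open Matrix

/-- The complex-linear subspace of block-diagonal matrices determined by the block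
assignment `blk` (indices `i`, `j` are in the same block iff `blk i = blk j`) and the
set `S` of block labels of repeated *scalar* blocks: on a scalar block the matrix is a
scalar multiple of the identity, the full blocks are unconstrained, and all
off-diagonal blocks vanish. -/
def BD {n : ℕ} (blk : Fin n → ℕ) (S : Finset ℕ) : Set (Matrix (Fin n) (Fin n) ℂ) :=
  {Δ | (∀ i j, blk i ≠ blk j → Δ i j = 0) ∧
       (∀ i j, blk i = blk j → blk i ∈ S → i ≠ j → Δ i j = 0) ∧
       (∀ i j, blk i = blk j → blk i ∈ S → Δ i i = Δ j j)}

/-- The Frobenius inner product ⟨A,B⟩ = trace(A*B). -/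
noncomputable def finner {n : ℕ} (A B : Matrix (Fin n) (Fin n) ℂ) : ℂ :=
  ∑ i, ∑ j, (starRingEnd ℂ) (A i j) * B i j

lemma finner_vecMulVec {n : ℕ} (u v : Fin n → ℂ) (B : Matrix (Fin n) (Fin n) ℂ) :
    finner (Matrix.vecMulVec u v) B = star u ⬝ᵥ (B *ᵥ star v) := by
  simp only [finner, vecMulVec_apply, mulVec, dotProduct, Pi.star_apply, _root_.map_mul,
    Finset.mul_sum]
  refine Finset.sum_congr rfl fun i _ => Finset.sum_congr rfl fun j _ => ?_
  simp only [starRingEnd_apply]; ring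

lemma finner_key {n : ℕ} (M Δ : Matrix (Fin n) (Fin n) ℂ) (c : ℂ) (x y : Fin n → ℂ) :
    finner (Matrix.vecMulVec (Mᴴ *ᵥ y) (star x)) (c • Δ)
      = star y ⬝ᵥ ((c • (M * Δ)) *ᵥ x) := by
  rw [finner_vecMulVec, star_star, star_mulVec, conjTranspose_conjTranspose,
    ← dotProduct_mulVec]
  rw [smul_mulVec, smul_mulVec, ← mulVec_mulVec, mulVec_smul]

lemma finner_smul_right {n : ℕ} (A B : Matrix (Fin n) (Fin n) ℂ) (c : ℂ) :
    finner A (c • B) = c * finner A B := by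
  simp only [finner, Matrix.smul_apply, smul_eq_mul, Finset.mul_sum]
  refine Finset.sum_congr rfl fun i _ => Finset.sum_congr rfl fun j _ => ?_
  ring

/-- Let λ ≠ 0 be a simple eigenvalue of εMΔ (with Δ ∈ 𝔹*), with unit right/left
eigenvectors x, y satisfying y*x ≠ 0 and the phase normalization
λ·(y*x) = |λ|·|y*x|.  Then, with z = M*y, Re⟨zx*, εΔ⟩ = |λ|·|y*x| > 0, and
consequently the orthogonal projection P_{𝔹*}(zx*) of zx* onto 𝔹* is nonzero. -/
theorem proj_of_eigvec_ne_zero {n : ℕ} (blk : Fin n → ℕ) (S : Finset ℕ)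
    (M Δ : Matrix (Fin n) (Fin n) ℂ) (hΔ : Δ ∈ BD blk S)
    (ε : ℝ) (hε : 0 < ε) (lam : ℂ) (hlam : lam ≠ 0)
    (x y : Fin n → ℂ)
    (hx : ((ε : ℂ) • (M * Δ)) *ᵥ x = lam • x)
    (hy : ((ε : ℂ) • (M * Δ))ᴴ *ᵥ y = (starRingEnd ℂ) lam • y)
    (hxn : ∑ i, ‖x i‖ ^ 2 = 1)
    (hyn : ∑ i, ‖y i‖ ^ 2 = 1)
    (hyx : star y ⬝ᵥ x ≠ 0)
    (hphase : lam * (star y ⬝ᵥ x)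
      = ((‖lam‖ * ‖star y ⬝ᵥ x‖ : ℝ) : ℂ)) :
    (finner (Matrix.vecMulVec (Mᴴ *ᵥ y) (star x)) ((ε : ℂ) • Δ)).re
        = ‖lam‖ * ‖star y ⬝ᵥ x‖ ∧
    0 < ‖lam‖ * ‖star y ⬝ᵥ x‖ ∧
    ∀ P, P ∈ BD blk S →
      (∀ Δ' ∈ BD blk S, finner (Matrix.vecMulVec (Mᴴ *ᵥ y) (star x) - P) Δ' = 0) →
      P ≠ 0 := by
  have hmain : finner (Matrix.vecMulVec (Mᴴ *ᵥ y) (star x)) ((ε : ℂ) • Δ)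
      = ((‖lam‖ * ‖star y ⬝ᵥ x‖ : ℝ) : ℂ) := by
    rw [finner_key, hx, dotProduct_smul, smul_eq_mul, hphase]
  have hpos : 0 < ‖lam‖ * ‖star y ⬝ᵥ x‖ :=
    mul_pos (norm_pos_iff.mpr hlam) (norm_pos_iff.mpr hyx)
  refine ⟨by rw [hmain, Complex.ofReal_re], hpos, ?_⟩
  intro P hP horth hP0
  subst hP0
  have h0 := horth Δ hΔ
  rw [sub_zero] at h0
  have : finner (Matrix.vecMulVec (Mᴴ *ᵥ y) (star x)) ((ε : ℂ) • Δ) = 0 := by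
    rw [finner_smul_right, h0, mul_zero]
  rw [hmain] at this
  have := Complex.ofReal_eq_zero.mp this
  exact absurd this (ne_of_gt hpos)
end

section
/- Let Δ(ε) be block-diagonal of unit-norm-block structure and suppose the stationarity relation Δ = D·P_{𝔹*}(zx*) holds, where D ∈ 𝔹* is a positive diagonal matrix chosen so that each scalar block δ_i of Δ satisfies |δ_i| = 1 and each full block Δ_j satisfies ‖Δ_j‖_F = 1. Then, with x, z partitioned conformally, Re⟨yx*, MΔ⟩ = ⟨P_{𝔹*}(zx*), Δ⟩ = Σ_{i=1}^{S} |z_i* x_i| + Σ_{j=1}^{F} ‖z_{S+j}‖·‖x_{S+j}‖, and this quantity is strictly positive provided z_i*x_i ≠ 0 for all i and ‖z_{S+j}‖‖x_{S+j}‖ ≠ 0 for all j. -/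
open scoped BigOperators
open Matrix

/-- The inner product x_k* z_k of the subvectors of x and z belonging to block k. -/
noncomputable def blockInner {n : ℕ} (blk : Fin n → ℕ) (x z : Fin n → ℂ) (k : ℕ) : ℂ :=
  ∑ i ∈ Finset.univ.filter (fun i => blk i = k), (starRingEnd ℂ) (x i) * z i

/-- The Euclidean norm of the subvector of v belonging to block k. -/
noncomputable def blockNorm {n : ℕ} (blk : Fin n → ℕ) (v : Fin n → ℂ) (k : ℕ) : ℝ :=
  Real.sqrt (∑ i ∈ Finset.univ.filter (fun i => blk i = k), ‖v i‖ ^ 2)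

/-- If Δ satisfies the stationarity relation Δ = D·P_{𝔹*}(zx*) with a positive
diagonal scaling normalizing each block (|δ_i| = 1, ‖Δ_j‖_F = 1), then
Re⟨yx*, MΔ⟩ = Σ_i |z_i* x_i| + Σ_j ‖z_{S+j}‖·‖x_{S+j}‖ > 0. -/
theorem stationary_inner_product_formula {n : ℕ} (hn : 0 < n)
    (blk : Fin n → ℕ) (S : Finset ℕ)
    (M Δ : Matrix (Fin n) (Fin n) ℂ) (x y z : Fin n → ℂ) (hz : z = Mᴴ *ᵥ y)
    (hoff : ∀ i j, blk i ≠ blk j → Δ i j = 0)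
    (d : ℕ → ℝ) (hd : ∀ k ∈ Finset.univ.image blk, 0 < d k)
    (hscal : ∀ i j, blk i = blk j → blk i ∈ S →
      Δ i j = if i = j then ((d (blk i) : ℝ) : ℂ) * blockInner blk x z (blk i) else 0)
    (hscalnorm : ∀ k ∈ Finset.univ.image blk, k ∈ S →
      d k * ‖blockInner blk x z k‖ = 1)
    (hfull : ∀ i j, blk i = blk j → blk i ∉ S →
      Δ i j = ((d (blk i) : ℝ) : ℂ) * (z i * (starRingEnd ℂ) (x j)))
    (hfullnorm : ∀ k ∈ Finset.univ.image blk, k ∉ S →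
      d k * (blockNorm blk z k * blockNorm blk x k) = 1) :
    (finner (Matrix.vecMulVec y (star x)) (M * Δ)).re
      = (∑ k ∈ (Finset.univ.image blk).filter (fun k => k ∈ S),
          ‖blockInner blk x z k‖)
        + ∑ k ∈ (Finset.univ.image blk).filter (fun k => k ∉ S),
            blockNorm blk z k * blockNorm blk x k ∧
    0 < (∑ k ∈ (Finset.univ.image blk).filter (fun k => k ∈ S),
          ‖blockInner blk x z k‖)
        + ∑ k ∈ (Finset.univ.image blk).filter (fun k => k ∉ S),
            blockNorm blk z k * blockNorm blk x k := by
  classical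
  set I := Finset.univ.image blk with hI
  set F : ℕ → Finset (Fin n) := fun k => Finset.univ.filter (fun i => blk i = k) with hF
  -- Step 1: rewrite the Frobenius inner product
  have hzl : ∀ l, (starRingEnd ℂ) (z l) = ∑ i, M i l * (starRingEnd ℂ) (y i) := by
    intro l
    simp [hz, Matrix.mulVec, Matrix.conjTranspose_apply, dotProduct, map_sum, mul_comm]
  have hstep1 : finner (Matrix.vecMulVec y (star x)) (M * Δ)
      = ∑ l, ∑ j, (starRingEnd ℂ) (z l) * x j * Δ l j := by
    rw [finner]
    have hL : (∑ i, ∑ j, (starRingEnd ℂ) ((Matrix.vecMulVec y (star x)) i j) * (M * Δ) i j)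
        = ∑ i, ∑ l, ∑ j, (starRingEnd ℂ) (y i) * M i l * Δ l j * x j := by
      refine Finset.sum_congr rfl fun i _ => ?_
      rw [Finset.sum_comm]
      refine Finset.sum_congr rfl fun j _ => ?_
      simp only [Matrix.vecMulVec_apply, Matrix.mul_apply, Pi.star_apply, Finset.mul_sum,
        Finset.sum_mul, _root_.map_mul, starRingEnd_apply, star_star]
      refine Finset.sum_congr rfl fun l _ => ?_
      ring
    have hR : (∑ l, ∑ j, (starRingEnd ℂ) (z l) * x j * Δ l j)
        = ∑ i, ∑ l, ∑ j, (starRingEnd ℂ) (y i) * M i l * Δ l j * x j := by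
      have h1 : ∀ l, (∑ j, (starRingEnd ℂ) (z l) * x j * Δ l j)
          = ∑ i, ∑ j, (starRingEnd ℂ) (y i) * M i l * Δ l j * x j := by
        intro l
        rw [Finset.sum_comm]
        refine Finset.sum_congr rfl fun j _ => ?_
        rw [hzl, Finset.sum_mul, Finset.sum_mul]
        refine Finset.sum_congr rfl fun i _ => ?_
        ring
      simp only [h1]
      exact Finset.sum_comm
    rw [hL, hR]
  -- Step 2: restrict to blocks
  have hstep2 : (∑ l, ∑ j, (starRingEnd ℂ) (z l) * x j * Δ l j)
      = ∑ k ∈ I, ∑ l ∈ F k, ∑ j ∈ F k, (starRingEnd ℂ) (z l) * x j * Δ l j := by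
    rw [← Finset.sum_fiberwise_of_maps_to (g := blk)
      (fun i _ => Finset.mem_image_of_mem blk (Finset.mem_univ i))]
    refine Finset.sum_congr rfl fun k _ => Finset.sum_congr rfl fun l hl => ?_
    rw [hF, Finset.mem_filter] at hl
    symm
    refine Finset.sum_subset (Finset.filter_subset _ _) fun j _ hj => ?_
    rw [Finset.mem_filter] at hj
    have : blk l ≠ blk j := by
      rw [hl.2]; intro h; exact hj (by simp [h.symm])
    rw [hoff l j this, mul_zero]
  -- Step 3: block values
  have hval : ∀ k ∈ I, (∑ l ∈ F k, ∑ j ∈ F k, (starRingEnd ℂ) (z l) * x j * Δ l j)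
      = ((if k ∈ S then d k * ‖blockInner blk x z k‖ ^ 2
          else d k * (blockNorm blk z k ^ 2 * blockNorm blk x k ^ 2) : ℝ) : ℂ) := by
    intro k hk
    by_cases hkS : k ∈ S
    · rw [if_pos hkS]
      have h1 : ∀ l ∈ F k, (∑ j ∈ F k, (starRingEnd ℂ) (z l) * x j * Δ l j)
          = (starRingEnd ℂ) (z l) * x l * (((d k : ℝ) : ℂ) * blockInner blk x z k) := by
        intro l hl
        rw [hF, Finset.mem_filter] at hl
        rw [Finset.sum_eq_single l]
        · rw [hscal l l rfl (hl.2 ▸ hkS), if_pos rfl, hl.2]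
        · intro j hj hjl
          rw [hF, Finset.mem_filter] at hj
          rw [hscal l j (hl.2.trans hj.2.symm) (hl.2 ▸ hkS), if_neg (fun h => hjl h.symm),
            mul_zero]
        · intro h; exact absurd (Finset.mem_filter.mpr ⟨Finset.mem_univ l, hl.2⟩) h
      rw [Finset.sum_congr rfl h1, ← Finset.sum_mul]
      have h2 : (∑ l ∈ F k, (starRingEnd ℂ) (z l) * x l)
          = (starRingEnd ℂ) (blockInner blk x z k) := by
        rw [blockInner, map_sum]
        exact Finset.sum_congr rfl fun l _ => by simp [_root_.map_mul]; ring
      rw [h2]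
      rw [mul_comm ((starRingEnd ℂ) _), mul_assoc, Complex.mul_conj]
      simp [Complex.sq_norm]
    · rw [if_neg hkS]
      have h1 : (∑ l ∈ F k, ∑ j ∈ F k, (starRingEnd ℂ) (z l) * x j * Δ l j)
          = ((d k : ℝ) : ℂ) * ((∑ l ∈ F k, ((‖z l‖ ^ 2 : ℝ) : ℂ)) *
            (∑ j ∈ F k, ((‖x j‖ ^ 2 : ℝ) : ℂ))) := by
        rw [Finset.sum_mul_sum, Finset.mul_sum]
        refine Finset.sum_congr rfl fun l hl => ?_
        rw [Finset.mul_sum]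
        refine Finset.sum_congr rfl fun j hj => ?_
        rw [hF, Finset.mem_filter] at hl hj
        rw [hfull l j (hl.2.trans hj.2.symm) (hl.2 ▸ hkS), hl.2]
        have e1 : ((‖z l‖ ^ 2 : ℝ) : ℂ) = (starRingEnd ℂ) (z l) * z l := by
          rw [mul_comm, Complex.mul_conj]; norm_cast; rw [Complex.sq_norm]
        have e2 : ((‖x j‖ ^ 2 : ℝ) : ℂ) = x j * (starRingEnd ℂ) (x j) := by
          rw [Complex.mul_conj]; norm_cast; rw [Complex.sq_norm]
        rw [e1, e2]; ring
      rw [h1]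
      have hz2 : (∑ l ∈ F k, ((‖z l‖ ^ 2 : ℝ) : ℂ))
          = ((blockNorm blk z k ^ 2 : ℝ) : ℂ) := by
        rw [blockNorm, Real.sq_sqrt (Finset.sum_nonneg fun i _ => sq_nonneg _)]
        push_cast; rfl
      have hx2 : (∑ j ∈ F k, ((‖x j‖ ^ 2 : ℝ) : ℂ))
          = ((blockNorm blk x k ^ 2 : ℝ) : ℂ) := by
        rw [blockNorm, Real.sq_sqrt (Finset.sum_nonneg fun i _ => sq_nonneg _)]
        push_cast; rfl
      rw [hz2, hx2]
      push_cast
      ring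
  -- Step 4: real part and normalization
  have hre : (finner (Matrix.vecMulVec y (star x)) (M * Δ)).re
      = ∑ k ∈ I, (if k ∈ S then ‖blockInner blk x z k‖
          else blockNorm blk z k * blockNorm blk x k) := by
    rw [hstep1, hstep2, Finset.sum_congr rfl hval, ← Complex.ofReal_sum, Complex.ofReal_re]
    refine Finset.sum_congr rfl fun k hk => ?_
    by_cases hkS : k ∈ S
    · rw [if_pos hkS, if_pos hkS]
      have h := hscalnorm k hk hkS
      calc d k * ‖blockInner blk x z k‖ ^ 2
          = (d k * ‖blockInner blk x z k‖) * ‖blockInner blk x z k‖ := by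
            ring
        _ = ‖blockInner blk x z k‖ := by rw [h, one_mul]
    · rw [if_neg hkS, if_neg hkS]
      have h := hfullnorm k hk hkS
      calc d k * (blockNorm blk z k ^ 2 * blockNorm blk x k ^ 2)
          = (d k * (blockNorm blk z k * blockNorm blk x k))
            * (blockNorm blk z k * blockNorm blk x k) := by ring
        _ = blockNorm blk z k * blockNorm blk x k := by rw [h, one_mul]
  have hsplit : (∑ k ∈ I, (if k ∈ S then ‖blockInner blk x z k‖
          else blockNorm blk z k * blockNorm blk x k))
      = (∑ k ∈ I.filter (fun k => k ∈ S), ‖blockInner blk x z k‖)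
        + ∑ k ∈ I.filter (fun k => k ∉ S), blockNorm blk z k * blockNorm blk x k := by
    rw [← Finset.sum_filter_add_sum_filter_not I (fun k => k ∈ S)]
    congr 1
    · exact Finset.sum_congr rfl fun k hk => if_pos (Finset.mem_filter.mp hk).2
    · exact Finset.sum_congr rfl fun k hk => if_neg (Finset.mem_filter.mp hk).2
  have heq : (finner (Matrix.vecMulVec y (star x)) (M * Δ)).re
      = (∑ k ∈ I.filter (fun k => k ∈ S), ‖blockInner blk x z k‖)
        + ∑ k ∈ I.filter (fun k => k ∉ S), blockNorm blk z k * blockNorm blk x k := by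
    rw [hre, hsplit]
  refine ⟨heq, ?_⟩
  -- positivity
  have hnn1 : ∀ k ∈ I.filter (fun k => k ∈ S), 0 ≤ ‖blockInner blk x z k‖ :=
    fun k _ => norm_nonneg _
  have hnn2 : ∀ k ∈ I.filter (fun k => k ∉ S),
      0 ≤ blockNorm blk z k * blockNorm blk x k :=
    fun k _ => mul_nonneg (Real.sqrt_nonneg _) (Real.sqrt_nonneg _)
  set k0 := blk ⟨0, hn⟩ with hk0def
  have hk0 : k0 ∈ I := Finset.mem_image_of_mem blk (Finset.mem_univ _)
  by_cases hk0S : k0 ∈ S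
  · have hpos : 0 < ‖blockInner blk x z k0‖ := by
      have h := hscalnorm k0 hk0 hk0S
      nlinarith [norm_nonneg (blockInner blk x z k0), hd k0 hk0]
    have h1 : 0 < ∑ k ∈ I.filter (fun k => k ∈ S), ‖blockInner blk x z k‖ :=
      Finset.sum_pos' hnn1 ⟨k0, Finset.mem_filter.mpr ⟨hk0, hk0S⟩, hpos⟩
    exact add_pos_of_pos_of_nonneg h1 (Finset.sum_nonneg hnn2)
  · have hpos : 0 < blockNorm blk z k0 * blockNorm blk x k0 := by
      have h := hfullnorm k0 hk0 hk0S
      nlinarith [mul_nonneg (Real.sqrt_nonneg (∑ i ∈ Finset.univ.filter (fun i => blk i = k0),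
        ‖z i‖ ^ 2)) (Real.sqrt_nonneg (∑ i ∈ Finset.univ.filter (fun i => blk i = k0),
        ‖x i‖ ^ 2)), hd k0 hk0]
    have h2 : 0 < ∑ k ∈ I.filter (fun k => k ∉ S), blockNorm blk z k * blockNorm blk x k :=
      Finset.sum_pos' hnn2 ⟨k0, Finset.mem_filter.mpr ⟨hk0, hk0S⟩, hpos⟩
    exact add_pos_of_nonneg_of_pos (Finset.sum_nonneg hnn1) h2
end
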